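/- Let X be a normed space, E a barrelled locally convex space, and G a locally convex space. Then every separately continuous bilinear map B : X × E → G is (jointly) continuous. -/

import Mathlib

open Filter Topology

/-- Every separately continuous bilinear map from the product of a normed space and a
barrelled locally convex space into a locally convex space is jointly continuous. -/
theorem stmt12 {X E G : Type*} [NormedAddCommGroup X] [NormedSpace ℝ X]
    [AddCommGroup E] [Module ℝ E] [TopologicalSpace E] [IsTopologicalAddGroup E]
    [ContinuousSMul ℝ E] [LocallyConvexSpace ℝ E] [BarrelledSpace ℝ E]
    [AddCommGroup G] [Module ℝ G] [TopologicalSpace G] [IsTopologicalAddGroup G]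
    [ContinuousSMul ℝ G] [LocallyConvexSpace ℝ G]
    (B : X →ₗ[ℝ] E →ₗ[ℝ] G)
    (h1 : ∀ x : X, Continuous fun y : E => B x y)
    (h2 : ∀ y : E, Continuous fun x : X => B x y) :
    Continuous fun p : X × E => B p.1 p.2 := by
  classical
  -- topology of `G` is generated by the gauge seminorm family
  have hq : WithSeminorms (gaugeSeminormFamily ℝ G) := with_gaugeSeminormFamily (𝕜 := ℝ) (E := G)
  set q := gaugeSeminormFamily ℝ G with hqdef
  -- Step 1 : continuity (as a tendsto statement) at the origin
  have key : Tendsto (fun p : X × E => B p.1 p.2) (𝓝 0) (𝓝 0) := by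
    rw [hq.tendsto_nhds]
    intro k ε hε
    set p : Seminorm ℝ G := q k with hpdef
    have hp : Continuous p := hq.continuous_seminorm k
    -- family of seminorms on `E` indexed by the closed unit ball of `X`
    set P : {x : X // ‖x‖ ≤ 1} → Seminorm ℝ E := fun x => p.comp (B x.1) with hP
    have bdd : BddAbove (Set.range P) := by
      rw [Seminorm.bddAbove_range_iff]
      intro y
      obtain ⟨C, hC, hCb⟩ :=
        Seminorm.bound_of_continuous_normedSpace (p.comp (B.flip y)) (by
          rw [Seminorm.coe_comp]
          exact hp.comp (h2 y))
      refine ⟨C, ?_⟩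
      rintro _ ⟨i, rfl⟩
      calc P i y = (p.comp (B.flip y)) i.1 := rfl
        _ ≤ C * ‖i.1‖ := hCb _
        _ ≤ C * 1 := by
            exact mul_le_mul_of_nonneg_left i.2 hC.le
        _ = C := mul_one C
    have hcont : Continuous ⇑(⨆ i, P i) := by
      rw [Seminorm.coe_iSup_eq bdd]
      exact Seminorm.continuous_iSup P (fun i => by
        rw [hP]
        simp only [Seminorm.coe_comp]
        exact hp.comp (h1 i.1)) bdd
    set r : Seminorm ℝ E := ⨆ i, P i with hr
    have hrapp : ∀ y, r y = ⨆ i, P i y := fun y => by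
      rw [hr, Seminorm.coe_iSup_eq bdd, iSup_apply]
    -- the main estimate : `p (B x y) ≤ ‖x‖ * r y`
    have est : ∀ (x : X) (y : E), p (B x y) ≤ ‖x‖ * r y := by
      intro x y
      by_cases hx : x = 0
      · simp [hx]
      · set u : X := ‖x‖⁻¹ • x with hu
        have hxn : ‖x‖ ≠ 0 := norm_ne_zero_iff.mpr hx
        have hun : ‖u‖ ≤ 1 := by
          rw [hu, norm_smul, norm_inv, norm_norm, inv_mul_cancel₀ hxn]
        have hBu : B x y = ‖x‖ • B u y := by
          rw [hu, map_smul, LinearMap.smul_apply, smul_smul, mul_inv_cancel₀ hxn, one_smul]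
        have h1' : p (B u y) ≤ r y := by
          rw [hrapp]
          exact le_ciSup (Seminorm.bddAbove_range_iff.mp bdd y) (⟨u, hun⟩ : {x : X // ‖x‖ ≤ 1})
        calc p (B x y) = ‖x‖ * p (B u y) := by
              rw [hBu, map_smul_eq_mul, Real.norm_eq_abs, abs_of_nonneg (norm_nonneg x)]
          _ ≤ ‖x‖ * r y := mul_le_mul_of_nonneg_left h1' (norm_nonneg x)
    -- conclude by squeezing
    have ht : Tendsto (fun z : X × E => ‖z.1‖ * r z.2) (𝓝 0) (𝓝 0) := by
      have : Continuous fun z : X × E => ‖z.1‖ * r z.2 :=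
        (continuous_fst.norm.mul (hcont.comp continuous_snd))
      have h0 := this.tendsto (0 : X × E)
      simpa using h0
    filter_upwards [ht (Iio_mem_nhds hε)] with z hz
    rw [sub_zero]
    exact lt_of_le_of_lt (est z.1 z.2) hz
  -- Step 2 : reduce continuity at an arbitrary point to continuity at the origin
  rw [continuous_iff_continuousAt]
  rintro ⟨x₀, y₀⟩
  have heq : (fun p : X × E => B p.1 p.2) = fun p : X × E =>
      B (p.1 - x₀) (p.2 - y₀) + B (p.1 - x₀) y₀ + B x₀ (p.2 - y₀) + B x₀ y₀ := by
    funext p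
    simp only [map_sub, LinearMap.sub_apply]
    abel
  have t0 : Tendsto (fun p : X × E => (p.1 - x₀, p.2 - y₀)) (𝓝 (x₀, y₀)) (𝓝 0) := by
    have : Continuous fun p : X × E => (p.1 - x₀, p.2 - y₀) :=
      ((continuous_fst.sub continuous_const).prodMk (continuous_snd.sub continuous_const))
    exact this.tendsto' _ _ (by simp [Prod.ext_iff])
  have t1 : Tendsto (fun p : X × E => B (p.1 - x₀) (p.2 - y₀)) (𝓝 (x₀, y₀)) (𝓝 0) :=
    key.comp t0
  have t2 : Tendsto (fun p : X × E => B (p.1 - x₀) y₀) (𝓝 (x₀, y₀)) (𝓝 0) := by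
    have : Continuous fun p : X × E => B (p.1 - x₀) y₀ :=
      (h2 y₀).comp (continuous_fst.sub continuous_const)
    have h0 := this.tendsto (x₀, y₀)
    simpa using h0
  have t3 : Tendsto (fun p : X × E => B x₀ (p.2 - y₀)) (𝓝 (x₀, y₀)) (𝓝 0) := by
    have : Continuous fun p : X × E => B x₀ (p.2 - y₀) :=
      (h1 x₀).comp (continuous_snd.sub continuous_const)
    have h0 := this.tendsto (x₀, y₀)
    simpa using h0
  have tall := ((t1.add t2).add t3).add (tendsto_const_nhds (x := B x₀ y₀)
    (f := 𝓝 (x₀, y₀)))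
  rw [ContinuousAt, heq]
  simpa using tall
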